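/- Let A, B be C*-algebras, φ, ψ : A → B *-homomorphisms, and suppose that for every finite subset F ⊆ A, every ε > 0, and every contraction b ∈ B, there exists c ∈ B such that ‖b*ψ(a)b − c*φ(a)c‖ ≤ ε for all a ∈ F. Then for every closed two-sided ideal I of A, the closed ideal of B generated by ψ(I) is contained in the closed ideal of B generated by φ(I). -/

import Mathlib

open Unitization Filter Topology
open scoped CStarAlgebra

/-- The closed two-sided ideal generated by a set. -/
def genClosedIdeal {B : Type*} [NonUnitalCStarAlgebra B] (s : Set B) : TwoSidedIdeal B :=
  sInf {J : TwoSidedIdeal B | IsClosed (J : Set B) ∧ s ⊆ J}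

section GenAux

variable {B : Type*} [NonUnitalCStarAlgebra B]

lemma mem_genClosedIdeal_iff {s : Set B} {x : B} :
    x ∈ genClosedIdeal s ↔
      ∀ K : TwoSidedIdeal B, IsClosed (K : Set B) → s ⊆ K → x ∈ K := by
  rw [genClosedIdeal, TwoSidedIdeal.mem_sInf]
  exact ⟨fun h K h1 h2 => h K ⟨h1, h2⟩, fun h K hK => h K hK.1 hK.2⟩

lemma isClosed_genClosedIdeal (s : Set B) : IsClosed (genClosedIdeal s : Set B) := by
  have h : (genClosedIdeal s : Set B) =
      ⋂ K ∈ {J : TwoSidedIdeal B | IsClosed (J : Set B) ∧ s ⊆ J}, (K : Set B) := by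
    ext x
    simp only [SetLike.mem_coe, mem_genClosedIdeal_iff, Set.mem_iInter, Set.mem_setOf_eq]
    exact ⟨fun h K hK => h K hK.1 hK.2, fun h K h1 h2 => h K ⟨h1, h2⟩⟩
  rw [h]
  exact isClosed_biInter fun K hK => hK.1

lemma subset_genClosedIdeal (s : Set B) : s ⊆ (genClosedIdeal s : Set B) :=
  fun _ hx => mem_genClosedIdeal_iff.mpr fun _ _ h2 => h2 hx

end GenAux

section OrderAux

variable (B : Type*) [NonUnitalCStarAlgebra B]

/-- The partial order on a non-unital C⋆-algebra induced by the spectral order on its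
unitization. -/
noncomputable def cstarSpectralOrder : PartialOrder B :=
  letI : PartialOrder B⁺¹ := CStarAlgebra.spectralOrder _
  PartialOrder.lift ((↑) : B → B⁺¹) inr_injective

lemma cstarStarOrderedRing :
    letI := cstarSpectralOrder B
    StarOrderedRing B := by
  letI : PartialOrder B⁺¹ := CStarAlgebra.spectralOrder _
  haveI : StarOrderedRing B⁺¹ := CStarAlgebra.spectralOrderedRing _
  letI := cstarSpectralOrder B
  have hle : ∀ x y : B, x ≤ y ↔ (x : B⁺¹) ≤ (y : B⁺¹) := fun _ _ => Iff.rfl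
  refine StarOrderedRing.of_nonneg_iff' (fun {x y} h z => ?_) (fun x => ?_)
  · rw [hle] at h ⊢
    rw [inr_add, inr_add]
    exact add_le_add le_rfl h
  · constructor
    · intro hx
      rw [hle, inr_zero] at hx
      obtain ⟨hsa', hsp'⟩ := hx
      rw [sub_zero] at hsa' hsp'
      have hsp : ∀ t ∈ spectrum ℝ (x : B⁺¹), 0 ≤ t := SpectrumRestricts.nnreal_iff.mp hsp'
      set c : B := cfcₙ Real.sqrt x with hc
      have hcsa : IsSelfAdjoint c := cfcₙ_predicate Real.sqrt x
      have hcx : (c : B⁺¹) = cfc Real.sqrt (x : B⁺¹) :=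
        Unitization.real_cfcₙ_eq_cfc_inr x Real.sqrt Real.sqrt_zero
      have hmul : ((c * c : B) : B⁺¹) = (x : B⁺¹) := by
        rw [inr_mul, hcx, ← cfc_mul _ _ _ Real.continuous_sqrt.continuousOn
          Real.continuous_sqrt.continuousOn]
        calc cfc (fun t => Real.sqrt t * Real.sqrt t) (x : B⁺¹)
            = cfc (id : ℝ → ℝ) (x : B⁺¹) :=
              cfc_congr fun t ht => Real.mul_self_sqrt (hsp t ht)
          _ = (x : B⁺¹) := cfc_id ℝ _
      exact ⟨c, by rw [hcsa.star_eq]; exact (inr_injective hmul).symm⟩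
    · rintro ⟨s, rfl⟩
      rw [hle, inr_zero, inr_mul, inr_star]
      exact star_mul_self_nonneg _

end OrderAux

/-- If `φ` approximately 1-dominates `ψ` as ordinary `*`-homomorphisms, then
`I(ψ)(I) ⊆ I(φ)(I)` for every closed two-sided ideal `I` of `A`. -/
theorem ideal_le_of_approx_dominates {A B : Type*}
    [NonUnitalCStarAlgebra A] [NonUnitalCStarAlgebra B]
    (φ ψ : A →⋆ₙₐ[ℂ] B)
    (hdom : ∀ (F : Finset A) (ε : ℝ), 0 < ε → ∀ b : B, ‖b‖ ≤ 1 →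
      ∃ c : B, ∀ a ∈ F, ‖star b * ψ a * b - star c * φ a * c‖ ≤ ε) :
    ∀ I : TwoSidedIdeal A, IsClosed (I : Set A) →
      genClosedIdeal (ψ '' (I : Set A)) ≤ genClosedIdeal (φ '' (I : Set A)) := by
  intro I hI
  have hJclosed : IsClosed ((genClosedIdeal (φ '' (I : Set A)) : TwoSidedIdeal B) : Set B) :=
    isClosed_genClosedIdeal _
  have hJsub : φ '' (I : Set A) ⊆ (genClosedIdeal (φ '' (I : Set A)) : Set B) :=
    subset_genClosedIdeal _
  refine sInf_le ⟨hJclosed, ?_⟩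
  rintro _ ⟨a, ha, rfl⟩
  show ψ a ∈ (genClosedIdeal (φ '' (I : Set A)) : Set B)
  set J := genClosedIdeal (φ '' (I : Set A)) with hJdef
  letI : PartialOrder B := cstarSpectralOrder B
  haveI : StarOrderedRing B := cstarStarOrderedRing B
  set l := CStarAlgebra.approximateUnit B with hl
  have hunit := CStarAlgebra.increasingApproximateUnit B
  haveI : l.NeBot := hunit.neBot
  have key : ∀ᶠ x in l, star x * ψ a * x ∈ (J : Set B) := by
    filter_upwards [hunit.eventually_norm] with b hb
    have hcl : star b * ψ a * b ∈ closure (J : Set B) := by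
      rw [Metric.mem_closure_iff]
      intro ε hε
      obtain ⟨c, hc⟩ := hdom {a} (ε / 2) (by positivity) b hb
      refine ⟨star c * φ a * c,
        J.mul_mem_right _ _ (J.mul_mem_left _ _ (hJsub ⟨a, ha, rfl⟩)), ?_⟩
      calc dist (star b * ψ a * b) (star c * φ a * c)
          = ‖star b * ψ a * b - star c * φ a * c‖ := dist_eq_norm _ _
        _ ≤ ε / 2 := hc a (Finset.mem_singleton_self a)
        _ < ε := by linarith
    rwa [hJclosed.closure_eq] at hcl
  have h1 : Tendsto (fun x : B => ψ a * x) l (𝓝 (ψ a)) := hunit.tendsto_mul_left (ψ a)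
  have h2 : Tendsto (fun x : B => x * ψ a) l (𝓝 (ψ a)) := hunit.tendsto_mul_right (ψ a)
  have h1' := tendsto_iff_norm_sub_tendsto_zero.mp h1
  have h2' := tendsto_iff_norm_sub_tendsto_zero.mp h2
  have h3 : Tendsto (fun x : B => x * ψ a * x) l (𝓝 (ψ a)) := by
    rw [tendsto_iff_norm_sub_tendsto_zero]
    have hbound : ∀ᶠ x in l, ‖x * ψ a * x - ψ a‖ ≤ ‖x * ψ a - ψ a‖ + ‖ψ a * x - ψ a‖ := by
      filter_upwards [hunit.eventually_norm] with x hx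
      have hsplit : x * ψ a * x - ψ a = (x * ψ a - ψ a) * x + (ψ a * x - ψ a) := by
        noncomm_ring
      rw [hsplit]
      refine (norm_add_le _ _).trans (add_le_add ?_ le_rfl)
      calc ‖(x * ψ a - ψ a) * x‖ ≤ ‖x * ψ a - ψ a‖ * ‖x‖ := norm_mul_le _ _
        _ ≤ ‖x * ψ a - ψ a‖ * 1 := by gcongr
        _ = ‖x * ψ a - ψ a‖ := mul_one _
    have hsum : Tendsto (fun x : B => ‖x * ψ a - ψ a‖ + ‖ψ a * x - ψ a‖) l (𝓝 0) := by
      simpa using h2'.add h1'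
    exact squeeze_zero' (.of_forall fun x => norm_nonneg _) hbound hsum
  have h4 : Tendsto (fun x : B => star x * ψ a * x) l (𝓝 (ψ a)) :=
    h3.congr' (by filter_upwards [hunit.eventually_star_eq] with x hx; rw [hx])
  exact hJclosed.mem_of_tendsto h4 key
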